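/- Let M = (m_{ij}) be a 4×4 centrosymmetric Markov matrix such that M = exp(Q) for some 4×4 centrosymmetric rate matrix Q. Then m11 + m14 + m22 + m23 > 1. -/

import Mathlib

open Matrix

/-- A Markov matrix: nonnegative entries, rows summing to one. -/
def IsMarkov {n : ℕ} (M : Matrix (Fin n) (Fin n) ℝ) : Prop :=
  (∀ i j, 0 ≤ M i j) ∧ ∀ i, ∑ j, M i j = 1

/-- A rate matrix: nonnegative off-diagonal entries, rows summing to zero. -/
def IsRate {n : ℕ} (Q : Matrix (Fin n) (Fin n) ℝ) : Prop :=
  (∀ i j, i ≠ j → 0 ≤ Q i j) ∧ ∀ i, ∑ j, Q i j = 0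

/-- Centrosymmetry: entrywise symmetry about the center of the matrix. -/
def IsCentrosymmetric {n : ℕ} (A : Matrix (Fin n) (Fin n) ℝ) : Prop :=
  ∀ i j, A i j = A i.rev j.rev

lemma crux (E N : Matrix (Fin 4) (Fin 4) ℝ) (h : E * N = 0) :
    E * NormedSpace.exp N = E := by
  letI : SeminormedRing (Matrix (Fin 4) (Fin 4) ℝ) := Matrix.linftyOpSemiNormedRing
  letI : NormedRing (Matrix (Fin 4) (Fin 4) ℝ) := Matrix.linftyOpNormedRing
  letI : NormedAlgebra ℝ (Matrix (Fin 4) (Fin 4) ℝ) := Matrix.linftyOpNormedAlgebra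
  have hs : Summable (fun k : ℕ => (k.factorial : ℝ)⁻¹ • N ^ k) :=
    NormedSpace.expSeries_summable' (𝕂 := ℝ) N
  rw [NormedSpace.exp_eq_tsum ℝ]
  rw [← hs.tsum_mul_left E]
  have hterm : ∀ k : ℕ, E * ((k.factorial : ℝ)⁻¹ • N ^ k) = if k = 0 then E else 0 := by
    intro k
    cases k with
    | zero => simp
    | succ j =>
      rw [mul_smul_comm, pow_succ', ← mul_assoc, h]
      simp
  rw [tsum_congr hterm, tsum_ite_eq]

set_option maxHeartbeats 1600000 in
lemma aux (q01 q02 q03 q10 q12 q13 : ℝ) (ha : 0 ≤ q01 + q02) (hb : 0 ≤ q10 + q13) :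
    1 < Matrix.trace (NormedSpace.exp
      (!![-(q01+q02+q03), q01, q02, q03;
          q10, -(q10+q12+q13), q12, q13;
          q13, q12, -(q10+q12+q13), q10;
          q03, q02, q01, -(q01+q02+q03)] : Matrix (Fin 4) (Fin 4) ℝ) *
      ((2:ℝ)⁻¹ • (1 + !![0,0,0,1;0,0,1,0;0,1,0,0;1,0,0,0]))) := by
  set Qm : Matrix (Fin 4) (Fin 4) ℝ :=
    !![-(q01+q02+q03), q01, q02, q03;
        q10, -(q10+q12+q13), q12, q13;
        q13, q12, -(q10+q12+q13), q10;
        q03, q02, q01, -(q01+q02+q03)] with hQm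
  set Em : Matrix (Fin 4) (Fin 4) ℝ :=
    (2:ℝ)⁻¹ • (1 + !![0,0,0,1;0,0,1,0;0,1,0,0;1,0,0,0]) with hEm
  clear_value Qm Em
  by_cases hs0 : q01 + q02 + (q10 + q13) = 0
  · -- degenerate case: a = b = 0
    have ha0 : q01 + q02 = 0 := by linarith
    have hb0 : q10 + q13 = 0 := by linarith
    have hEQ : Em * Qm = 0 := by
      rw [hEm, hQm]
      ext i j
      fin_cases i <;> fin_cases j <;>
        (simp [Matrix.mul_apply, Fin.sum_univ_four, Matrix.vecHead, Matrix.vecTail, Matrix.one_apply]; linarith)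
    have hEexp : Em * NormedSpace.exp Qm = Em := crux Em Qm hEQ
    rw [Matrix.trace_mul_comm, hEexp, hEm, Matrix.trace_smul, Matrix.trace_add,
      Matrix.trace_one]
    norm_num [Matrix.trace, Fin.sum_univ_four, Matrix.diag, Matrix.vecHead, Matrix.vecTail, Function.comp, -Matrix.cons_val', Matrix.cons_val_two, Matrix.cons_val_three]
  · -- main case
    set a : ℝ := q01 + q02 with hadef
    set b : ℝ := q10 + q13 with hbdef
    clear_value a b
    obtain ⟨s, hsdef⟩ : ∃ s : ℝ, s = a + b := ⟨a + b, rfl⟩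
    have hs0' : s ≠ 0 := by rw [hsdef]; intro h; exact hs0 (by linarith)
    set G : Matrix (Fin 4) (Fin 4) ℝ := !![1,a,0,1; 1,-b,1,0; 1,-b,-1,0; 1,a,0,-1] with hG
    set G' : Matrix (Fin 4) (Fin 4) ℝ :=
      (2*s)⁻¹ • !![b,a,a,b; 1,-1,-1,1; 0,s,-s,0; s,0,0,-s] with hG'
    set D0 : Matrix (Fin 4) (Fin 4) ℝ := Matrix.diagonal ![0,-s,0,0] with hD0
    set N : Matrix (Fin 4) (Fin 4) ℝ :=
      !![0,0,0,0; 0,0,0,0;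
         0,0,-(q10+q12+q13)-q12, q10-q13;
         0,0,q01-q02, -(q01+q02+q03)-q03] with hN
    set E' : Matrix (Fin 4) (Fin 4) ℝ := Matrix.diagonal ![1,1,0,0] with hE'
    clear_value G G' D0 N E'
    have hD0eq : D0 = !![0,0,0,0; 0,-s,0,0; 0,0,0,0; 0,0,0,0] := by
      rw [hD0]; ext i j
      fin_cases i <;> fin_cases j <;>
        simp [Matrix.diagonal_apply, Matrix.vecHead, Matrix.vecTail]
    have hE'eq : E' = !![1,0,0,0; 0,1,0,0; 0,0,0,0; 0,0,0,0] := by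
      rw [hE']; ext i j
      fin_cases i <;> fin_cases j <;>
        simp [Matrix.diagonal_apply, Matrix.vecHead, Matrix.vecTail]
    have hGG' : G * G' = 1 := by
      rw [hG, hG']
      have h2 : s ≠ 0 := hs0'
      ext i j
      fin_cases i <;> fin_cases j <;>
        simp [Matrix.mul_apply, Fin.sum_univ_four, Matrix.vecHead, Matrix.vecTail, Matrix.one_apply] <;>
        (try field_simp) <;> (try ring) <;> (try linarith)
    have hG'G : G' * G = 1 := mul_eq_one_comm.mp hGG'
    have hU : IsUnit G := ⟨⟨G, G', hGG', hG'G⟩, rfl⟩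
    have hGinv : G⁻¹ = G' := Matrix.inv_eq_right_inv hGG'
    have hQG : Qm * G = G * (D0 + N) := by
      rw [hQm, hG, hD0eq, hN, hsdef, hadef, hbdef]
      ext i j
      fin_cases i <;> fin_cases j <;>
        (simp [Matrix.mul_apply, Fin.sum_univ_four, Matrix.vecHead, Matrix.vecTail]; try ring)
    have hQfact : Qm = G * (D0 + N) * G⁻¹ := by
      rw [hGinv]
      calc Qm = Qm * (G * G') := by rw [hGG', mul_one]
        _ = (Qm * G) * G' := by rw [mul_assoc]
        _ = G * (D0 + N) * G' := by rw [hQG]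
    have hexpQ : NormedSpace.exp Qm = G * NormedSpace.exp (D0 + N) * G⁻¹ := by
      rw [hQfact, Matrix.exp_conj G (D0 + N) hU]
    have hcomm : Commute D0 N := by
      have h1 : D0 * N = 0 := by
        rw [hD0eq, hN]; ext i j; fin_cases i <;> fin_cases j <;>
          simp [Matrix.mul_apply, Fin.sum_univ_four, Matrix.vecHead, Matrix.vecTail]
      have h2 : N * D0 = 0 := by
        rw [hD0eq, hN]; ext i j; fin_cases i <;> fin_cases j <;>
          simp [Matrix.mul_apply, Fin.sum_univ_four, Matrix.vecHead, Matrix.vecTail]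
      unfold Commute SemiconjBy; rw [h1, h2]
    have hexpT : NormedSpace.exp (D0 + N) =
        NormedSpace.exp D0 * NormedSpace.exp N :=
      Matrix.exp_add_of_commute D0 N hcomm
    have hED : NormedSpace.exp D0 = Matrix.diagonal ![1, Real.exp (-s), 1, 1] := by
      have hv : (NormedSpace.exp (![0,-s,0,0] : Fin 4 → ℝ)) = ![1, Real.exp (-s), 1, 1] := by
        funext i
        fin_cases i <;> simp [← Real.exp_eq_exp_ℝ]
      rw [hD0, Matrix.exp_diagonal, hv]
    have hE'N : E' * N = 0 := by
      rw [hE'eq, hN]; ext i j; fin_cases i <;> fin_cases j <;>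
        simp [Matrix.mul_apply, Fin.sum_univ_four, Matrix.vecHead, Matrix.vecTail]
    have hE'exp : E' * NormedSpace.exp N = E' := crux E' N hE'N
    have hEG : Em * G = G * E' := by
      rw [hEm, hG, hE'eq]; ext i j; fin_cases i <;> fin_cases j <;>
        (simp [Matrix.mul_apply, Fin.sum_univ_four, Matrix.vecHead, Matrix.vecTail, Matrix.one_apply]; try ring)
    have key : Matrix.trace (NormedSpace.exp Qm * Em) = 1 + Real.exp (-s) := by
      rw [Matrix.trace_mul_comm, hexpQ, hexpT]
      have step : Em * (G * (NormedSpace.exp D0 * NormedSpace.exp N) * G⁻¹)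
          = G * (E' * NormedSpace.exp D0 * NormedSpace.exp N) * G⁻¹ := by
        rw [← mul_assoc Em, ← mul_assoc Em, hEG]
        simp only [mul_assoc]
      rw [step, hGinv, Matrix.trace_mul_comm, ← mul_assoc, hG'G, one_mul]
      have hE'D : E' * NormedSpace.exp D0 = NormedSpace.exp D0 * E' := by
        rw [hED, hE', Matrix.diagonal_mul_diagonal, Matrix.diagonal_mul_diagonal]
        exact congrArg _ (funext fun i => mul_comm _ _)
      rw [hE'D, mul_assoc, hE'exp, hED, hE', Matrix.diagonal_mul_diagonal]
      simp [Matrix.trace, Fin.sum_univ_four, Matrix.diagonal]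
    rw [key]
    have := Real.exp_pos (-s)
    linarith
/-- A 4×4 centrosymmetric Markov matrix with a centrosymmetric Markov generator satisfies
`m11 + m14 + m22 + m23 > 1`. -/
theorem trace_upper_block_gt_one
    (m11 m12 m13 m14 m21 m22 m23 m24 : ℝ)
    (M : Matrix (Fin 4) (Fin 4) ℝ)
    (hMdef : M = !![m11, m12, m13, m14; m21, m22, m23, m24;
                    m24, m23, m22, m21; m14, m13, m12, m11])
    (hM : IsMarkov M)
    (Q : Matrix (Fin 4) (Fin 4) ℝ)
    (hQcs : IsCentrosymmetric Q) (hQ : IsRate Q)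
    (hexp : NormedSpace.exp Q = M) :
    1 < m11 + m14 + m22 + m23 := by
  obtain ⟨hQpos, hQsum⟩ := hQ
  have h0 : Q 0 0 + Q 0 1 + Q 0 2 + Q 0 3 = 0 := by
    have := hQsum 0; rwa [Fin.sum_univ_four] at this
  have h1 : Q 1 0 + Q 1 1 + Q 1 2 + Q 1 3 = 0 := by
    have := hQsum 1; rwa [Fin.sum_univ_four] at this
  have e20 : Q 2 0 = Q 1 3 := hQcs 2 0
  have e21 : Q 2 1 = Q 1 2 := hQcs 2 1
  have e22 : Q 2 2 = Q 1 1 := hQcs 2 2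
  have e23 : Q 2 3 = Q 1 0 := hQcs 2 3
  have e30 : Q 3 0 = Q 0 3 := hQcs 3 0
  have e31 : Q 3 1 = Q 0 2 := hQcs 3 1
  have e32 : Q 3 2 = Q 0 1 := hQcs 3 2
  have e33 : Q 3 3 = Q 0 0 := hQcs 3 3
  have hQmat : Q = !![-(Q 0 1 + Q 0 2 + Q 0 3), Q 0 1, Q 0 2, Q 0 3;
      Q 1 0, -(Q 1 0 + Q 1 2 + Q 1 3), Q 1 2, Q 1 3;
      Q 1 3, Q 1 2, -(Q 1 0 + Q 1 2 + Q 1 3), Q 1 0;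
      Q 0 3, Q 0 2, Q 0 1, -(Q 0 1 + Q 0 2 + Q 0 3)] := by
    ext i j
    fin_cases i <;> fin_cases j <;>
      simp [Matrix.vecHead, Matrix.vecTail] <;>
      linarith [e20, e21, e22, e23, e30, e31, e32, e33, h0, h1]
  have ha : 0 ≤ Q 0 1 + Q 0 2 := by
    have p1 := hQpos 0 1 (by decide)
    have p2 := hQpos 0 2 (by decide)
    linarith
  have hb : 0 ≤ Q 1 0 + Q 1 3 := by
    have p1 := hQpos 1 0 (by decide)
    have p2 := hQpos 1 3 (by decide)
    linarith
  have key := aux (Q 0 1) (Q 0 2) (Q 0 3) (Q 1 0) (Q 1 2) (Q 1 3) ha hb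
  rw [← hQmat, hexp] at key
  have htr : Matrix.trace (M * ((2:ℝ)⁻¹ •
      (1 + !![0,0,0,1;0,0,1,0;0,1,0,0;1,0,0,0]))) = m11 + m14 + m22 + m23 := by
    rw [hMdef]
    simp [Matrix.trace, Matrix.diag, Matrix.mul_apply, Fin.sum_univ_four,
      Matrix.one_apply, Matrix.vecHead, Matrix.vecTail]
    ring
  rw [htr] at key
  exact key
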